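/- Let T be a rooted tree with root r, viewed as a graph, and let (C, M) be a König cover of T. Define T^* = { t ∈ T : for every s with r a proper prefix of s and s a prefix of t, either s ∉ C or the edge {s restricted to length |s|−1, s} ∉ M }. Then for every t ∈ T^*, the restriction of (C, M) to the subtree of T above t is a König cover of that subtree. -/

import Mathlib

/-- `(C, M)` is a König cover of the simple graph `G`. -/
def IsKonigCover {V : Type*} (G : SimpleGraph V) (C : Set V) (M : Set (Sym2 V)) : Prop :=
  M ⊆ G.edgeSet ∧
  (M.Pairwise fun e f => ∀ v, v ∈ e → v ∉ f) ∧
  (∀ e ∈ G.edgeSet, ∃ v ∈ e, v ∈ C) ∧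
  (∀ e ∈ M, ∃! v, v ∈ e ∧ v ∈ C) ∧
  (∀ v ∈ C, ∃ e ∈ M, v ∈ e)

/-- A tree `T ⊆ List ℕ` viewed as a graph: edges join each `σ ∈ T` to its one-step
extensions in `T`. -/
def treeGraph (T : Set (List ℕ)) : SimpleGraph (List ℕ) where
  Adj s t := s ∈ T ∧ t ∈ T ∧ ((∃ n, t = s ++ [n]) ∨ ∃ n, s = t ++ [n])
  symm := by
    constructor
    rintro s t ⟨hs, ht, h | h⟩
    · exact ⟨ht, hs, Or.inr h⟩
    · exact ⟨ht, hs, Or.inl h⟩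
  loopless := by
    constructor
    rintro s ⟨-, -, ⟨n, h⟩ | ⟨n, h⟩⟩ <;>
      simpa using congrArg List.length h

/-- `T` is a rooted tree with root `r`: `T = { r ++ σ : σ ∈ T₀ }` for some prefix-closed
`T₀` containing the empty list. -/
def IsRootedTree (r : List ℕ) (T : Set (List ℕ)) : Prop :=
  ∃ T₀ : Set (List ℕ), [] ∈ T₀ ∧ (∀ ⦃σ τ : List ℕ⦄, σ <+: τ → τ ∈ T₀ → σ ∈ T₀) ∧
    T = (fun σ => r ++ σ) '' T₀

/-- `T^*` for a rooted tree `T` with root `r` and a König cover `(C, M)`: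
those `t ∈ T` such that every `s` with `r ≺ s ⪯ t` satisfies `s ∉ C` or
`{s.dropLast, s} ∉ M`. -/
def Tstar (r : List ℕ) (T : Set (List ℕ)) (C : Set (List ℕ))
    (M : Set (Sym2 (List ℕ))) : Set (List ℕ) :=
  {t ∈ T | ∀ s : List ℕ, r <+: s → r ≠ s → s <+: t →
    s ∉ C ∨ s(s.dropLast, s) ∉ M}

/-- For every `t ∈ T^*`, the restriction of `(C, M)` to the subtree of `T` above `t` is a
König cover of that subtree. -/
lemma prefix_concat_cases {t a : List ℕ} {n : ℕ} (h : t <+: a ++ [n]) :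
    t <+: a ∨ t = a ++ [n] := by
  rcases le_or_gt t.length a.length with hle | hlt
  · exact Or.inl (List.prefix_of_prefix_length_le h (List.prefix_append a [n]) hle)
  · right
    have hlen := h.length_le
    simp at hlen
    exact h.eq_of_length (by simp; omega)

theorem statement9 (r : List ℕ) (T : Set (List ℕ)) (hT : IsRootedTree r T)
    (C : Set (List ℕ)) (M : Set (Sym2 (List ℕ)))
    (h : IsKonigCover (treeGraph T) C M)
    (t : List ℕ) (ht : t ∈ Tstar r T C M) :
    IsKonigCover (treeGraph {u ∈ T | t <+: u})
      (C ∩ {u ∈ T | t <+: u})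
      {e ∈ M | ∀ v ∈ e, v ∈ {u ∈ T | t <+: u}} := by
  obtain ⟨T₀, -, -, hTeq⟩ := hT
  have hrT : ∀ u ∈ T, r <+: u := by
    intro u hu; rw [hTeq] at hu; obtain ⟨σ, -, rfl⟩ := hu
    exact List.prefix_append r σ
  obtain ⟨hM, hpair, hcov, huniq, hsat⟩ := h
  obtain ⟨htT, htstar⟩ := ht
  -- key: if the subtree contains an endpoint of an edge of M, it contains both.
  have key : ∀ a : List ℕ, ∀ n : ℕ, a ∈ T → a ++ [n] ∈ T → s(a, a ++ [n]) ∈ M →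
      ∀ v, (v = a ∨ v = a ++ [n]) → v ∈ C → t <+: v → t <+: a := by
    rintro a n haT hbT heM v (rfl | rfl) hvC htv
    · exact htv
    · rcases prefix_concat_cases htv with h' | rfl
      · exact h'
      · exfalso
        have hrne : r ≠ a ++ [n] := by
          intro hre
          have := (hrT a haT).length_le
          have := congrArg List.length hre
          simp at this; omega
        rcases htstar (a ++ [n]) (hrT _ hbT) hrne List.prefix_rfl with hc | hm
        · exact hc hvC
        · rw [List.dropLast_concat] at hm; exact hm heM
  refine ⟨?_, ?_, ?_, ?_, ?_⟩
  · rintro e ⟨heM, hall⟩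
    induction e using Sym2.ind with
    | _ a b =>
      have h2 := hM heM
      rw [SimpleGraph.mem_edgeSet] at h2 ⊢
      obtain ⟨-, -, hab⟩ := h2
      exact ⟨hall a (by simp), hall b (by simp), hab⟩
  · intro e he f hf hef v hve hvf
    exact hpair he.1 hf.1 hef v hve hvf
  · intro e he
    induction e using Sym2.ind with
    | _ a b =>
      rw [SimpleGraph.mem_edgeSet] at he
      obtain ⟨⟨haT, hta⟩, ⟨hbT, htb⟩, hab⟩ := he
      have heT : s(a, b) ∈ (treeGraph T).edgeSet := ⟨haT, hbT, hab⟩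
      obtain ⟨v, hve, hvC⟩ := hcov _ heT
      refine ⟨v, hve, hvC, ?_⟩
      rcases Sym2.mem_iff.mp hve with rfl | rfl
      · exact ⟨haT, hta⟩
      · exact ⟨hbT, htb⟩
  · intro e he
    obtain ⟨v, ⟨hve, hvC⟩, hun⟩ := huniq e he.1
    refine ⟨v, ⟨hve, hvC, he.2 v hve⟩, ?_⟩
    rintro w ⟨hwe, hwC, -⟩
    exact hun w ⟨hwe, hwC⟩
  · rintro v ⟨hvC, hvT, htv⟩
    obtain ⟨e, heM, hve⟩ := hsat v hvC
    refine ⟨e, ⟨heM, ?_⟩, hve⟩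
    induction e using Sym2.ind with
    | _ a b =>
      have hedge := hM heM
      rw [SimpleGraph.mem_edgeSet] at hedge
      obtain ⟨haT, hbT, hab⟩ := hedge
      have hvab := Sym2.mem_iff.mp hve
      rcases hab with ⟨n, rfl⟩ | ⟨n, rfl⟩
      · have hta : t <+: a := key a n haT hbT heM v hvab hvC htv
        intro w hwe
        rcases Sym2.mem_iff.mp hwe with rfl | rfl
        · exact ⟨haT, hta⟩
        · exact ⟨hbT, hta.trans (List.prefix_append a [n])⟩
      · have heM' : s(b, b ++ [n]) ∈ M := by rwa [Sym2.eq_swap] at heM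
        have htb : t <+: b := key b n hbT haT heM' v hvab.symm hvC htv
        intro w hwe
        rcases Sym2.mem_iff.mp hwe with rfl | rfl
        · exact ⟨haT, htb.trans (List.prefix_append b [n])⟩
        · exact ⟨hbT, htb⟩
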